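/- Let T: V → V be a self-adjoint endomorphism of a 3-dimensional real inner product space with distinct eigenvalues λ₁ < λ₂ < λ₃ and eigenvectors e₁, e₂, e₃, and let S be another self-adjoint endomorphism diagonalized by the same basis with eigenvalues μⱼ. If (λⱼ - λₖ)·aᵢⱼₖ = (λᵢ - λₖ)·bᵢⱼₖ and (μⱼ - μₖ)·aᵢⱼₖ = (μᵢ - μₖ)·bᵢⱼₖ hold for real numbers aᵢⱼₖ, bᵢⱼₖ (for all distinct i,j,k), and moreover μⱼμₖ = C + ε̂λⱼλₖ for all j ≠ k with C ≠ 0, all μⱼ nonzero and C + ε̂λᵢλₖ ≠ 0, then aᵢⱼₖ = 0 for all distinct i, j, k. -/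
import Mathlib


/-- Abstract form of the step `⟨∇_{eᵢ}eⱼ, eₖ⟩ = 0` in the proof of Theorem 5: two
self-adjoint endomorphisms `T, S` of a 3-dimensional real inner product space are
simultaneously diagonalized by a basis `e` with eigenvalues `λ₁ < λ₂ < λ₃` and `μⱼ`;
if the Codazzi-type relations `(λⱼ - λₖ) aᵢⱼₖ = (λᵢ - λₖ) bᵢⱼₖ` and
`(μⱼ - μₖ) aᵢⱼₖ = (μᵢ - μₖ) bᵢⱼₖ` hold for all distinct `i, j, k`, and moreover
`μⱼ μₖ = C + ε̂ λⱼ λₖ` for `j ≠ k` with `C ≠ 0`, all `μⱼ ≠ 0` and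
`C + ε̂ λᵢ λₖ ≠ 0`, then `aᵢⱼₖ = 0` for all distinct `i, j, k`. -/
theorem stmt_16 {V : Type*} [NormedAddCommGroup V] [InnerProductSpace ℝ V]
    (hdim : Module.finrank ℝ V = 3)
    (T S : V →ₗ[ℝ] V) (hT : T.IsSymmetric) (hS : S.IsSymmetric)
    (e : Fin 3 → V) (he : ∀ j, e j ≠ 0)
    (lam mu : Fin 3 → ℝ)
    (hTe : ∀ j, T (e j) = lam j • e j) (hSe : ∀ j, S (e j) = mu j • e j)
    (hord : ∀ i j : Fin 3, i < j → lam i < lam j)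
    (a b : Fin 3 → Fin 3 → Fin 3 → ℝ)
    (εh C : ℝ) (hεh : εh = 1 ∨ εh = -1) (hC : C ≠ 0)
    (hmu0 : ∀ j, mu j ≠ 0)
    (hmuprod : ∀ j k, j ≠ k → mu j * mu k = C + εh * lam j * lam k)
    (hCn : ∀ i k, i ≠ k → C + εh * lam i * lam k ≠ 0)
    (hrel1 : ∀ i j k, i ≠ j → j ≠ k → i ≠ k →
      (lam j - lam k) * a i j k = (lam i - lam k) * b i j k)
    (hrel2 : ∀ i j k, i ≠ j → j ≠ k → i ≠ k →
      (mu j - mu k) * a i j k = (mu i - mu k) * b i j k) :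
    ∀ i j k, i ≠ j → j ≠ k → i ≠ k → a i j k = 0 := by

  intro i j k hijne hjkne hikne
  have hij := hmuprod i j hijne
  have hjk := hmuprod j k hjkne
  have hik := hmuprod i k hikne
  have h1 := hrel1 i j k hijne hjkne hikne
  have h2 := hrel2 i j k hijne hjkne hikne
  have hlij : lam i ≠ lam j := by
    rcases lt_or_gt_of_ne hijne with h | h
    · exact ne_of_lt (hord i j h)
    · exact ne_of_gt (hord j i h)
  have hljk : lam j ≠ lam k := by
    rcases lt_or_gt_of_ne hjkne with h | h
    · exact ne_of_lt (hord j k h)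
    · exact ne_of_gt (hord k j h)
  have hε0 : εh ≠ 0 := by rcases hεh with h | h <;> rw [h] <;> norm_num
  have t1 : mu j * mu j * (C + εh * lam i * lam k)
      = (C + εh * lam i * lam j) * (C + εh * lam j * lam k) := by
    linear_combination (-(mu j * mu j)) * hik + (mu j * mu k) * hij
      + (C + εh * lam i * lam j) * hjk
  have key : εh * C * (lam i - lam j) * (lam j - lam k) * a i j k = 0 := by
    linear_combination (-(a i j k)) * t1
      + (mu j * (C + εh * lam i * lam k)) * h2
      + (-(εh * lam j * (C + εh * lam i * lam k))) * h1
      + ((C + εh * lam i * lam k) * b i j k) * hij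
      + ((C + εh * lam i * lam k) * (a i j k - b i j k)) * hjk
  have hx : εh * C * (lam i - lam j) * (lam j - lam k) ≠ 0 :=
    mul_ne_zero (mul_ne_zero (mul_ne_zero hε0 hC) (sub_ne_zero.mpr hlij))
      (sub_ne_zero.mpr hljk)
  exact (mul_eq_zero.mp key).resolve_left hx
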